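/- Let P = conv{x ∈ ℝ^4 : x_i ∈ {0,1} for all i, and x_1 + x_2 + x_3 + x_4 = 2} (a double covering polytope with six vertices). Then for every k ∈ ℕ and every simple graph G on Fin k, there is no injective affine map φ : ℝ^4 → ℝ^k such that φ(P) equals conv(SSP(G)) or equals an exposed face of conv(SSP(G)). -/

import Mathlib

/-- The vertex set of the stable set polytope of a simple graph `G` on `Fin k`. -/
def SSP {k : ℕ} (G : SimpleGraph (Fin k)) : Set (Fin k → ℝ) :=
  {y | (∀ i, y i = 0 ∨ y i = 1) ∧ ∀ i j, G.Adj i j → y i + y j ≤ 1}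

/-- The vertex set of the double covering polytope
`P = conv{x ∈ {0,1}^4 : x₁ + x₂ + x₃ + x₄ = 2}`. -/
def DCP6 : Set (Fin 4 → ℝ) :=
  {x | (∀ i, x i = 0 ∨ x i = 1) ∧ x 0 + x 1 + x 2 + x 3 = 2}

/-! ### Generic helpers -/

noncomputable def dotL {k : ℕ} (a : Fin k → ℝ) : (Fin k → ℝ) →ₗ[ℝ] ℝ where
  toFun x := ∑ i, a i * x i
  map_add' x y := by simp [mul_add, Finset.sum_add_distrib]
  map_smul' c x := by
    simp only [Pi.smul_apply, smul_eq_mul, RingHom.id_apply, Finset.mul_sum]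
    exact Finset.sum_congr rfl fun i _ => by ring

lemma dotL_apply {k : ℕ} (a x : Fin k → ℝ) : dotL a x = ∑ i, a i * x i := rfl

lemma comb_forces {ι : Type*} (t : Finset ι) (w : ι → ℝ) (p : ι → ℝ) (c : ℝ)
    (h0 : ∀ i ∈ t, 0 ≤ w i) (h1 : ∑ i ∈ t, w i = 1)
    (hle : ∀ i ∈ t, p i ≤ c) (heq : ∑ i ∈ t, w i * p i = c) :
    ∀ i ∈ t, w i ≠ 0 → p i = c := by
  intro j hj hwj
  by_contra hne
  have hwj' : 0 < w j := lt_of_le_of_ne (h0 j hj) (Ne.symm hwj)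
  have hlt : w j * p j < w j * c :=
    mul_lt_mul_of_pos_left (lt_of_le_of_ne (hle j hj) hne) hwj'
  have hs : ∑ i ∈ t, w i * p i < ∑ i ∈ t, w i * c :=
    Finset.sum_lt_sum (fun i hi => mul_le_mul_of_nonneg_left (hle i hi) (h0 i hi)) ⟨j, hj, hlt⟩
  rw [heq, ← Finset.sum_mul, h1, one_mul] at hs
  exact lt_irrefl c hs

lemma support_sum_eq {ι : Type*} {E : Type*} [AddCommGroup E] [Module ℝ E]
    (t : Finset ι) (w : ι → ℝ) (p : ι → E) (v : E)
    (h1 : ∑ i ∈ t, w i = 1) (hp : ∀ i ∈ t, w i ≠ 0 → p i = v) :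
    ∑ i ∈ t, w i • p i = v := by
  have h : ∀ i ∈ t, w i • p i = w i • v := by
    intro i hi
    by_cases hw : w i = 0
    · simp [hw]
    · rw [hp i hi hw]
  rw [Finset.sum_congr rfl h, ← Finset.sum_smul, h1, one_smul]

lemma hull_decomp {E : Type*} [AddCommGroup E] [Module ℝ E] {s : Set E} {x : E}
    (hx : x ∈ convexHull ℝ s) :
    ∃ (ι : Type) (t : Finset ι) (w : ι → ℝ) (z : ι → E),
      (∀ i ∈ t, 0 ≤ w i) ∧ ∑ i ∈ t, w i = 1 ∧ (∀ i ∈ t, z i ∈ s) ∧ ∑ i ∈ t, w i • z i = x := by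
  rw [convexHull_eq] at hx
  obtain ⟨ι, t, w, z, h0, h1, hz, hc⟩ := hx
  exact ⟨ι, t, w, z, h0, h1, hz, by rwa [Finset.centerMass_eq_of_sum_1 _ _ h1] at hc⟩

/-! ### Affine map helpers -/

lemma affine_apply {k : ℕ} (φ : (Fin 4 → ℝ) →ᵃ[ℝ] (Fin k → ℝ)) (x : Fin 4 → ℝ) :
    φ x = φ.linear x + φ 0 := by
  have := φ.map_vadd 0 x
  simpa using this

lemma affine_comb {k : ℕ} (φ : (Fin 4 → ℝ) →ᵃ[ℝ] (Fin k → ℝ)) {ι : Type*} (t : Finset ι)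
    (w : ι → ℝ) (x : ι → Fin 4 → ℝ) (h1 : ∑ i ∈ t, w i = 1) :
    φ (∑ i ∈ t, w i • x i) = ∑ i ∈ t, w i • φ (x i) := by
  rw [affine_apply, map_sum]
  have h : ∀ i ∈ t, w i • φ (x i) = w i • φ.linear (x i) + w i • φ 0 := by
    intro i _
    rw [affine_apply φ (x i), smul_add]
  rw [Finset.sum_congr rfl h, Finset.sum_add_distrib, ← Finset.sum_smul, h1, one_smul]
  congr 1
  exact Finset.sum_congr rfl fun i _ => (map_smul φ.linear (w i) (x i))

lemma linear_inj {k : ℕ} (φ : (Fin 4 → ℝ) →ᵃ[ℝ] (Fin k → ℝ)) (hinj : Function.Injective φ) :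
    Function.Injective φ.linear := by
  intro x y hxy
  apply hinj
  rw [affine_apply φ x, affine_apply φ y, hxy]

lemma sum_transfer {k : ℕ} (φ : (Fin 4 → ℝ) →ᵃ[ℝ] (Fin k → ℝ)) (hinj : Function.Injective φ)
    {a b c d : Fin 4 → ℝ} (h : φ a + φ b = φ c + φ d) : a + b = c + d := by
  have h1 : φ a - φ c = φ d - φ b := by
    rw [sub_eq_sub_iff_add_eq_add, h, add_comm]
  have h2 : φ.linear (a - c) = φ.linear (d - b) := by
    rw [show a - c = a -ᵥ c from rfl, show d - b = d -ᵥ b from rfl,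
      AffineMap.linearMap_vsub, AffineMap.linearMap_vsub]
    exact h1
  have h3 : a - c = d - b := linear_inj φ hinj h2
  rw [sub_eq_sub_iff_add_eq_add] at h3
  rw [h3, add_comm]


lemma affine_add_eq {k : ℕ} (φ : (Fin 4 → ℝ) →ᵃ[ℝ] (Fin k → ℝ))
    {a b c d : Fin 4 → ℝ} (h : a + b = c + d) : φ a + φ b = φ c + φ d := by
  have h3 : a - c = d - b := by rw [sub_eq_sub_iff_add_eq_add, h, add_comm]
  have h2 : φ a - φ c = φ d - φ b := by
    have e1 := AffineMap.linearMap_vsub φ a c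
    have e2 := AffineMap.linearMap_vsub φ d b
    simp only [vsub_eq_sub] at e1 e2
    rw [← e1, ← e2, h3]
  rw [sub_eq_sub_iff_add_eq_add] at h2
  rw [h2, add_comm]


noncomputable def vA : Fin 4 → ℝ := ![1,1,0,0]
noncomputable def vA' : Fin 4 → ℝ := ![0,0,1,1]
noncomputable def vB : Fin 4 → ℝ := ![1,0,1,0]
noncomputable def vB' : Fin 4 → ℝ := ![0,1,0,1]
noncomputable def vC : Fin 4 → ℝ := ![1,0,0,1]
noncomputable def vC' : Fin 4 → ℝ := ![0,1,1,0]

lemma vA_mem : vA ∈ DCP6 := ⟨fun i => by fin_cases i <;> norm_num [vA], by norm_num [vA, Matrix.cons_val_two, Matrix.cons_val_three]⟩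
lemma vA'_mem : vA' ∈ DCP6 := ⟨fun i => by fin_cases i <;> norm_num [vA'], by norm_num [vA', Matrix.cons_val_two, Matrix.cons_val_three]⟩
lemma vB_mem : vB ∈ DCP6 := ⟨fun i => by fin_cases i <;> norm_num [vB], by norm_num [vB, Matrix.cons_val_two, Matrix.cons_val_three]⟩
lemma vB'_mem : vB' ∈ DCP6 := ⟨fun i => by fin_cases i <;> norm_num [vB'], by norm_num [vB', Matrix.cons_val_two, Matrix.cons_val_three]⟩
lemma vC_mem : vC ∈ DCP6 := ⟨fun i => by fin_cases i <;> norm_num [vC], by norm_num [vC, Matrix.cons_val_two, Matrix.cons_val_three]⟩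
lemma vC'_mem : vC' ∈ DCP6 := ⟨fun i => by fin_cases i <;> norm_num [vC'], by norm_num [vC', Matrix.cons_val_two, Matrix.cons_val_three]⟩

lemma sum_AB : vA + vA' = vB + vB' := by
  funext i; fin_cases i <;> norm_num [vA, vA', vB, vB']
lemma sum_AC : vA + vA' = vC + vC' := by
  funext i; fin_cases i <;> norm_num [vA, vA', vC, vC']

lemma vA_ne_vB : vA ≠ vB := by
  intro h; have := congrFun h 1; norm_num [vA, vB] at this
lemma vA_ne_vC : vA ≠ vC := by
  intro h; have := congrFun h 1; norm_num [vA, vC] at this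
lemma vB_ne_vC : vB ≠ vC := by
  intro h; have := congrFun h 2; norm_num [vB, vC, Matrix.cons_val_two, Matrix.cons_val_three] at this

lemma pair_two {x x' : Fin 4 → ℝ} (hx : x ∈ DCP6) (hx' : x' ∈ DCP6) {i : Fin 4}
    (h : x i + x' i = 2) : x i = 1 ∧ x' i = 1 := by
  rcases hx.1 i with h1|h1 <;> rcases hx'.1 i with h2|h2 <;> constructor <;> linarith

lemma pair_zero {x x' : Fin 4 → ℝ} (hx : x ∈ DCP6) (hx' : x' ∈ DCP6) {i : Fin 4}
    (h : x i + x' i = 0) : x i = 0 ∧ x' i = 0 := by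
  rcases hx.1 i with h1|h1 <;> rcases hx'.1 i with h2|h2 <;> constructor <;> linarith

lemma pairfix_AB {x x' : Fin 4 → ℝ} (hx : x ∈ DCP6) (hx' : x' ∈ DCP6)
    (h : x + x' = vA + vB) : (x = vA ∧ x' = vB) ∨ (x = vB ∧ x' = vA) := by
  have h0 := congrFun h 0; have h1 := congrFun h 1
  have h2 := congrFun h 2; have h3 := congrFun h 3
  simp only [Pi.add_apply] at h0 h1 h2 h3
  norm_num [vA, vB, Matrix.cons_val_two, Matrix.cons_val_three] at h0 h1 h2 h3
  obtain ⟨hx0, hx'0⟩ := pair_two hx hx' h0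
  obtain ⟨hx3, hx'3⟩ := pair_zero hx hx' h3
  have hs := hx.2
  rcases hx.1 1 with e1|e1
  · right
    have e2 : x 2 = 1 := by linarith
    constructor
    · funext i; fin_cases i <;> simp [vB] <;> linarith
    · funext i; fin_cases i <;> simp [vA] <;> linarith
  · left
    have e2 : x 2 = 0 := by linarith
    constructor
    · funext i; fin_cases i <;> simp [vA] <;> linarith
    · funext i; fin_cases i <;> simp [vB] <;> linarith

lemma pairfix_AC {x x' : Fin 4 → ℝ} (hx : x ∈ DCP6) (hx' : x' ∈ DCP6)
    (h : x + x' = vA + vC) : (x = vA ∧ x' = vC) ∨ (x = vC ∧ x' = vA) := by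
  have h0 := congrFun h 0; have h1 := congrFun h 1
  have h2 := congrFun h 2; have h3 := congrFun h 3
  simp only [Pi.add_apply] at h0 h1 h2 h3
  norm_num [vA, vC, Matrix.cons_val_two, Matrix.cons_val_three] at h0 h1 h2 h3
  obtain ⟨hx0, hx'0⟩ := pair_two hx hx' h0
  obtain ⟨hx2, hx'2⟩ := pair_zero hx hx' h2
  have hs := hx.2
  rcases hx.1 1 with e1|e1
  · right
    have e3 : x 3 = 1 := by linarith
    constructor
    · funext i; fin_cases i <;> simp [vC] <;> linarith
    · funext i; fin_cases i <;> simp [vA] <;> linarith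
  · left
    have e3 : x 3 = 0 := by linarith
    constructor
    · funext i; fin_cases i <;> simp [vA] <;> linarith
    · funext i; fin_cases i <;> simp [vC] <;> linarith

lemma pairfix_BC {x x' : Fin 4 → ℝ} (hx : x ∈ DCP6) (hx' : x' ∈ DCP6)
    (h : x + x' = vB + vC) : (x = vB ∧ x' = vC) ∨ (x = vC ∧ x' = vB) := by
  have h0 := congrFun h 0; have h1 := congrFun h 1
  have h2 := congrFun h 2; have h3 := congrFun h 3
  simp only [Pi.add_apply] at h0 h1 h2 h3
  norm_num [vB, vC, Matrix.cons_val_two, Matrix.cons_val_three] at h0 h1 h2 h3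
  obtain ⟨hx0, hx'0⟩ := pair_two hx hx' h0
  obtain ⟨hx1, hx'1⟩ := pair_zero hx hx' h1
  have hs := hx.2
  rcases hx.1 2 with e2|e2
  · right
    have e3 : x 3 = 1 := by linarith
    constructor
    · funext i; fin_cases i <;> simp [vC] <;> linarith
    · funext i; fin_cases i <;> simp [vB] <;> linarith
  · left
    have e3 : x 3 = 0 := by linarith
    constructor
    · funext i; fin_cases i <;> simp [vB] <;> linarith
    · funext i; fin_cases i <;> simp [vC] <;> linarith


lemma dcp_sum_two {q : Fin 4 → ℝ} (hq : q ∈ DCP6) : ∑ i, q i = 2 := by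
  rw [Fin.sum_univ_four]; exact hq.2

lemma dcp_dot_le {p q : Fin 4 → ℝ} (hp : p ∈ DCP6) (hq : q ∈ DCP6) : dotL p q ≤ 2 := by
  rw [dotL_apply, ← dcp_sum_two hq]
  refine Finset.sum_le_sum fun i _ => ?_
  rcases hp.1 i with h|h <;> rcases hq.1 i with h'|h' <;> rw [h, h'] <;> norm_num

lemma dcp_dot_self {p : Fin 4 → ℝ} (hp : p ∈ DCP6) : dotL p p = 2 := by
  rw [dotL_apply, ← dcp_sum_two hp] at *
  refine Finset.sum_congr rfl fun i _ => ?_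
  rcases hp.1 i with h|h <;> rw [h] <;> norm_num

lemma dcp_dot_eq {p q : Fin 4 → ℝ} (hp : p ∈ DCP6) (hq : q ∈ DCP6)
    (h : dotL p q = 2) : q = p := by
  have hle1 : ∀ i ∈ Finset.univ, p i * q i ≤ q i := by
    intro i _
    rcases hp.1 i with h1|h1 <;> rcases hq.1 i with h2|h2 <;> rw [h1, h2] <;> norm_num
  have hle2 : ∀ i ∈ Finset.univ, q i * p i ≤ p i := by
    intro i _
    rcases hp.1 i with h1|h1 <;> rcases hq.1 i with h2|h2 <;> rw [h1, h2] <;> norm_num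
  have he1 : ∑ i, p i * q i = ∑ i, q i := by
    rw [← dotL_apply, h, dcp_sum_two hq]
  have he2 : ∑ i, q i * p i = ∑ i, p i := by
    rw [show ∑ i, q i * p i = ∑ i, p i * q i from Finset.sum_congr rfl fun i _ => mul_comm _ _,
      ← dotL_apply, h, dcp_sum_two hp]
  have h1 := (Finset.sum_eq_sum_iff_of_le hle1).mp he1
  have h2 := (Finset.sum_eq_sum_iff_of_le hle2).mp he2
  funext i
  have a1 := h1 i (Finset.mem_univ i)
  have a2 := h2 i (Finset.mem_univ i)
  nlinarith [a1, a2]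

lemma dcp_exposed {p : Fin 4 → ℝ} (hp : p ∈ DCP6) {x : Fin 4 → ℝ}
    (hx : x ∈ convexHull ℝ DCP6) (h : dotL p x = 2) : x = p := by
  obtain ⟨ι, t, w, z, h0, h1, hz, hsum⟩ := hull_decomp hx
  have hle : ∀ i ∈ t, dotL p (z i) ≤ 2 := fun i hi => dcp_dot_le hp (hz i hi)
  have heq : ∑ i ∈ t, w i * dotL p (z i) = 2 := by
    rw [← h, ← hsum, map_sum]
    exact Finset.sum_congr rfl fun i _ => by rw [map_smul, smul_eq_mul]
  have hf := comb_forces t w (fun i => dotL p (z i)) 2 h0 h1 hle heq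
  rw [← hsum]
  exact support_sum_eq t w z p h1 fun i hi hw => dcp_dot_eq hp (hz i hi) (hf i hi hw)

lemma dcp_hull_dot_le {p : Fin 4 → ℝ} (hp : p ∈ DCP6) {x : Fin 4 → ℝ}
    (hx : x ∈ convexHull ℝ DCP6) : dotL p x ≤ 2 := by
  refine convexHull_min (fun q hq => dcp_dot_le hp hq) (convex_halfSpace_le (dotL p).isLinear 2) hx

-- 0/1 dot lemmas for ℝ^k
lemma dot_le01 {k : ℕ} {z u : Fin k → ℝ} (hz : ∀ i, z i = 0 ∨ z i = 1)
    (hu : ∀ i, u i = 0 ∨ u i = 1) :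
    dotL (fun i => 2 * z i - 1) u ≤ dotL (fun i => 2 * z i - 1) z := by
  rw [dotL_apply, dotL_apply]
  refine Finset.sum_le_sum fun i _ => ?_
  rcases hz i with h|h <;> rcases hu i with h'|h' <;> rw [h, h'] <;> norm_num

lemma dot_eq01 {k : ℕ} {z u : Fin k → ℝ} (hz : ∀ i, z i = 0 ∨ z i = 1)
    (hu : ∀ i, u i = 0 ∨ u i = 1)
    (h : dotL (fun i => 2 * z i - 1) u = dotL (fun i => 2 * z i - 1) z) : u = z := by
  have hle : ∀ i ∈ Finset.univ, (2 * z i - 1) * u i ≤ (2 * z i - 1) * z i := by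
    intro i _
    rcases hz i with h1|h1 <;> rcases hu i with h2|h2 <;> rw [h1, h2] <;> norm_num
  have := (Finset.sum_eq_sum_iff_of_le hle).mp h
  funext i
  have a := this i (Finset.mem_univ i)
  rcases hz i with h1|h1 <;> rcases hu i with h2|h2 <;> rw [h1, h2] at a ⊢ <;> norm_num at a


section Face
variable {k : ℕ} (G : SimpleGraph (Fin k)) (l : (Fin k → ℝ) →L[ℝ] ℝ)

lemma face_sub_hull_max {x : Fin k → ℝ}
    (hxQ : x ∈ convexHull ℝ (SSP G)) (hxmax : ∀ y ∈ convexHull ℝ (SSP G), l y ≤ l x) :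
    x ∈ convexHull ℝ {z | z ∈ SSP G ∧ ∀ y ∈ convexHull ℝ (SSP G), l y ≤ l z} := by
  classical
  obtain ⟨ι, t, w, z, h0, h1, hz, hsum⟩ := hull_decomp hxQ
  have hle : ∀ i ∈ t, l (z i) ≤ l x := fun i hi =>
    hxmax _ (subset_convexHull ℝ _ (hz i hi))
  have heq : ∑ i ∈ t, w i * l (z i) = l x := by
    rw [← hsum, map_sum]
    exact Finset.sum_congr rfl fun i _ => by rw [map_smul, smul_eq_mul]
  have hf := comb_forces t w (fun i => l (z i)) (l x) h0 h1 hle heq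
  set t' := t.filter (fun i => w i ≠ 0) with ht'
  have h1' : ∑ i ∈ t', w i = 1 := by rw [ht', Finset.sum_filter_ne_zero]; exact h1
  have hxt' : ∑ i ∈ t', w i • z i = x := by
    rw [ht', Finset.sum_filter_of_ne (fun i _ hne => by
      intro hw; apply hne; rw [hw, zero_smul])]
    exact hsum
  have hmem : ∀ i ∈ t', z i ∈ {z | z ∈ SSP G ∧ ∀ y ∈ convexHull ℝ (SSP G), l y ≤ l z} := by
    intro i hi
    rw [ht', Finset.mem_filter] at hi
    refine ⟨hz i hi.1, fun y hy => ?_⟩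
    rw [show l (z i) = l x from hf i hi.1 hi.2]
    exact hxmax y hy
  have := Finset.centerMass_mem_convexHull t'
    (fun i hi => h0 i (Finset.mem_filter.mp hi).1) (by rw [h1']; norm_num) hmem
  rwa [Finset.centerMass_eq_of_sum_1 _ _ h1', hxt'] at this

variable (φ : (Fin 4 → ℝ) →ᵃ[ℝ] (Fin k → ℝ))

lemma key1 (hinj : Function.Injective φ)
    (himg : φ '' (convexHull ℝ DCP6) =
      {x ∈ convexHull ℝ (SSP G) | ∀ y ∈ convexHull ℝ (SSP G), l y ≤ l x}) :
    ∀ p ∈ DCP6, φ p ∈ SSP G ∧ ∀ y ∈ convexHull ℝ (SSP G), l y ≤ l (φ p) := by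
  intro p hp
  have hmem : φ p ∈ {x ∈ convexHull ℝ (SSP G) | ∀ y ∈ convexHull ℝ (SSP G), l y ≤ l x} := by
    rw [← himg]; exact ⟨p, subset_convexHull ℝ _ hp, rfl⟩
  refine ⟨?_, hmem.2⟩
  have hhull := face_sub_hull_max G l hmem.1 hmem.2
  obtain ⟨ι, t, w, z, h0, h1, hz, hsum⟩ := hull_decomp hhull
  have hzF : ∀ i, ∃ x ∈ convexHull ℝ DCP6, i ∈ t → φ x = z i := by
    intro i
    by_cases hi : i ∈ t
    · have : z i ∈ φ '' (convexHull ℝ DCP6) := by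
        rw [himg]
        exact ⟨subset_convexHull ℝ _ (hz i hi).1, (hz i hi).2⟩
      obtain ⟨x, hx, hφx⟩ := this
      exact ⟨x, hx, fun _ => hφx⟩
    · exact ⟨p, subset_convexHull ℝ _ hp, fun h => absurd h hi⟩
  choose xs hxs hφxs using hzF
  have hps : ∑ i ∈ t, w i • xs i = p := by
    apply hinj
    rw [affine_comb φ t w xs h1,
      Finset.sum_congr rfl fun i hi => by rw [hφxs i hi], hsum]
  have heq2 : ∑ i ∈ t, w i * dotL p (xs i) = 2 := by
    have : dotL p (∑ i ∈ t, w i • xs i) = 2 := by rw [hps]; exact dcp_dot_self hp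
    rw [map_sum] at this
    rw [← this]
    exact Finset.sum_congr rfl fun i _ => by rw [map_smul, smul_eq_mul]
  have hf := comb_forces t w (fun i => dotL p (xs i)) 2 h0 h1
    (fun i _ => dcp_hull_dot_le hp (hxs i)) heq2
  obtain ⟨i0, hi0, hw0⟩ := Finset.exists_ne_zero_of_sum_ne_zero (h1 ▸ one_ne_zero)
  have hxp : xs i0 = p := dcp_exposed hp (hxs i0) (show dotL p (xs i0) = 2 from hf i0 hi0 hw0)
  have : φ p = z i0 := by rw [← hxp]; exact hφxs i0 hi0
  rw [this]
  exact (hz i0 hi0).1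

lemma key2 (hinj : Function.Injective φ)
    (himg : φ '' (convexHull ℝ DCP6) =
      {x ∈ convexHull ℝ (SSP G) | ∀ y ∈ convexHull ℝ (SSP G), l y ≤ l x})
    {z : Fin k → ℝ} (hz : z ∈ SSP G) (hmax : ∀ y ∈ convexHull ℝ (SSP G), l y ≤ l z) :
    ∃ p ∈ DCP6, z = φ p := by
  have hzF : z ∈ φ '' (convexHull ℝ DCP6) := by
    rw [himg]; exact ⟨subset_convexHull ℝ _ hz, hmax⟩
  obtain ⟨x, hxconv, hφx⟩ := hzF
  obtain ⟨ι, t, w, p, h0, h1, hp, hsum⟩ := hull_decomp hxconv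
  have hzsum : ∑ i ∈ t, w i • φ (p i) = z := by
    rw [← affine_comb φ t w p h1, hsum, hφx]
  have hSSP : ∀ i ∈ t, φ (p i) ∈ SSP G := fun i hi =>
    (key1 G l φ hinj himg (p i) (hp i hi)).1
  set a : Fin k → ℝ := fun i => 2 * z i - 1 with ha
  have hle : ∀ i ∈ t, dotL a (φ (p i)) ≤ dotL a z := fun i hi =>
    dot_le01 hz.1 (hSSP i hi).1
  have heq : ∑ i ∈ t, w i * dotL a (φ (p i)) = dotL a z := by
    rw [← hzsum, map_sum]
    exact Finset.sum_congr rfl fun i _ => by rw [map_smul, smul_eq_mul]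
  have hf := comb_forces t w (fun i => dotL a (φ (p i))) (dotL a z) h0 h1 hle heq
  obtain ⟨i0, hi0, hw0⟩ := Finset.exists_ne_zero_of_sum_ne_zero (h1 ▸ one_ne_zero)
  have : φ (p i0) = z := dot_eq01 hz.1 (hSSP i0 hi0).1 (show dotL a (φ (p i0)) = dotL a z from hf i0 hi0 hw0)
  exact ⟨p i0, hp i0 hi0, this.symm⟩

end Face


lemma conn {k : ℕ} (G : SimpleGraph (Fin k)) (l : (Fin k → ℝ) →L[ℝ] ℝ)
    (A A' B B' C C' : Fin k → ℝ)
    (hA : A ∈ SSP G) (hA' : A' ∈ SSP G) (hB : B ∈ SSP G) (hB' : B' ∈ SSP G)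
    (hC : C ∈ SSP G) (hC' : C' ∈ SSP G)
    (hmaxA : ∀ y ∈ convexHull ℝ (SSP G), l y ≤ l A)
    (hmaxB : ∀ y ∈ convexHull ℝ (SSP G), l y ≤ l B)
    (hwB : A + A' = B + B') (hwC : A + A' = C + C')
    (hpair : ∀ u u', u ∈ SSP G → (∀ y ∈ convexHull ℝ (SSP G), l y ≤ l u) →
       u' ∈ SSP G → (∀ y ∈ convexHull ℝ (SSP G), l y ≤ l u') → u + u' = A + B →
       (u = A ∧ u' = B) ∨ (u = B ∧ u' = A))
    {i j : Fin k} (hiAB : A i ≠ B i) (hjAB : A j ≠ B j)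
    (hiAC : A i = C i) (hjAC : A j ≠ C j) : False := by
  classical
  have hDB : ∀ m, A m ≠ B m → A m + A' m = 1 := by
    intro m hm
    have hw := congrFun hwB m
    simp only [Pi.add_apply] at hw
    rcases hA.1 m with h1|h1 <;> rcases hA'.1 m with h2|h2 <;>
      rcases hB.1 m with h3|h3 <;> rcases hB'.1 m with h4|h4 <;>
      first
        | exact absurd (h1.trans h3.symm) hm
        | linarith
  have flipgen : ∀ (X X' : Fin k → ℝ), X ∈ SSP G → X' ∈ SSP G →
      A + A' = X + X' →
      ∀ m n, G.Adj m n → A m + A' m = 1 → A n + A' n = 1 → X m + X n = 1 := by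
    intro X X' hX hX' hsum m n hadj hm hn
    have h1 := hX.2 m n hadj
    have h2 := hX'.2 m n hadj
    have e1 := congrFun hsum m
    have e2 := congrFun hsum n
    simp only [Pi.add_apply] at e1 e2
    linarith
  have hcore : ∀ m n, G.Adj m n → A m ≠ B m → A n ≠ B n → A m = C m → A n ≠ C n → False := by
    intro m n hadj hm hn hmc hnc
    have dm := hDB m hm
    have dn := hDB n hn
    have fA : A m + A n = 1 := flipgen A A' hA hA' rfl m n hadj dm dn
    have fC : C m + C n = 1 := flipgen C C' hC hC' hwC m n hadj dm dn
    exact hnc (by linarith)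
  set P : Fin k → Prop := fun m => A m ≠ B m ∧ A m = C m with hP
  set S' : Fin k → ℝ := fun m => if P m then B m else A m with hS'
  set T' : Fin k → ℝ := fun m => if P m then A m else B m with hT'
  have hS'm : ∀ m, S' m = if P m then B m else A m := fun m => rfl
  have hT'm : ∀ m, T' m = if P m then A m else B m := fun m => rfl
  have hS'SSP : S' ∈ SSP G := by
    constructor
    · intro m
      rw [hS'm m]
      by_cases hm : P m
      · rw [if_pos hm]; exact hB.1 m
      · rw [if_neg hm]; exact hA.1 m
    · intro m n hadj
      rw [hS'm m, hS'm n]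
      by_cases hm : P m <;> by_cases hn : P n
      · rw [if_pos hm, if_pos hn]; exact hB.2 m n hadj
      · rw [if_pos hm, if_neg hn]
        by_cases hab : A n = B n
        · rw [hab]; exact hB.2 m n hadj
        · exact (hcore m n hadj hm.1 hab hm.2 (fun h => hn ⟨hab, h⟩)).elim
      · rw [if_neg hm, if_pos hn]
        by_cases hab : A m = B m
        · rw [hab]; exact hB.2 m n hadj
        · exact (hcore n m hadj.symm hn.1 hab hn.2 (fun h => hm ⟨hab, h⟩)).elim
      · rw [if_neg hm, if_neg hn]; exact hA.2 m n hadj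
  have hT'SSP : T' ∈ SSP G := by
    constructor
    · intro m
      rw [hT'm m]
      by_cases hm : P m
      · rw [if_pos hm]; exact hA.1 m
      · rw [if_neg hm]; exact hB.1 m
    · intro m n hadj
      rw [hT'm m, hT'm n]
      by_cases hm : P m <;> by_cases hn : P n
      · rw [if_pos hm, if_pos hn]; exact hA.2 m n hadj
      · rw [if_pos hm, if_neg hn]
        by_cases hab : A n = B n
        · rw [← hab]; exact hA.2 m n hadj
        · exact (hcore m n hadj hm.1 hab hm.2 (fun h => hn ⟨hab, h⟩)).elim
      · rw [if_neg hm, if_pos hn]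
        by_cases hab : A m = B m
        · rw [← hab]; exact hA.2 m n hadj
        · exact (hcore n m hadj.symm hn.1 hab hn.2 (fun h => hm ⟨hab, h⟩)).elim
      · rw [if_neg hm, if_neg hn]; exact hB.2 m n hadj
  have hsum' : S' + T' = A + B := by
    funext m
    simp only [Pi.add_apply, hS'm m, hT'm m]
    by_cases hm : P m
    · rw [if_pos hm, if_pos hm]; ring
    · rw [if_neg hm, if_neg hm]
  have hQsub := subset_convexHull ℝ (SSP G)
  have hlAB : l B = l A := le_antisymm (hmaxA B (hQsub hB)) (hmaxB A (hQsub hA))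
  have hadd : l S' + l T' = l A + l B := by
    rw [← map_add, ← map_add, hsum']
  have hS'le : l S' ≤ l A := hmaxA S' (hQsub hS'SSP)
  have hT'le : l T' ≤ l A := hmaxA T' (hQsub hT'SSP)
  have hS'eq : l S' = l A := by linarith
  have hT'eq : l T' = l A := by linarith
  have hmaxS' : ∀ y ∈ convexHull ℝ (SSP G), l y ≤ l S' := fun y hy => by
    rw [hS'eq]; exact hmaxA y hy
  have hmaxT' : ∀ y ∈ convexHull ℝ (SSP G), l y ≤ l T' := fun y hy => by
    rw [hT'eq]; exact hmaxA y hy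
  have hPi : P i := ⟨hiAB, hiAC⟩
  have hPj : ¬ P j := fun h => hjAC h.2
  rcases hpair S' T' hS'SSP hmaxS' hT'SSP hmaxT' hsum' with ⟨h1, _⟩ | ⟨h1, _⟩
  · have h2 := congrFun h1 i
    rw [hS'm i, if_pos hPi] at h2
    exact hiAB h2.symm
  · have h2 := congrFun h1 j
    rw [hS'm j, if_neg hPj] at h2
    exact hjAB h2


/-- The octahedron `conv(DCP6)` is neither affinely equivalent to any stable set
polytope `conv(SSP(G))` nor to any exposed face of one. -/
theorem stmt7 (k : ℕ) (G : SimpleGraph (Fin k)) :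
    ¬ ∃ φ : (Fin 4 → ℝ) →ᵃ[ℝ] (Fin k → ℝ),
        Function.Injective φ ∧
        (φ '' (convexHull ℝ DCP6) = convexHull ℝ (SSP G) ∨
          ∃ F : Set (Fin k → ℝ),
            IsExposed ℝ (convexHull ℝ (SSP G)) F ∧ φ '' (convexHull ℝ DCP6) = F) := by
  rintro ⟨φ, hinj, hcase⟩
  obtain ⟨F, hexp, himg0⟩ :
      ∃ F, IsExposed ℝ (convexHull ℝ (SSP G)) F ∧ φ '' (convexHull ℝ DCP6) = F := by
    rcases hcase with h | ⟨F, h1, h2⟩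
    · exact ⟨convexHull ℝ (SSP G), fun _ => ⟨0, by ext x; simp⟩, h⟩
    · exact ⟨F, h1, h2⟩
  have hFne : F.Nonempty := ⟨φ vA, himg0 ▸ ⟨vA, subset_convexHull ℝ _ vA_mem, rfl⟩⟩
  obtain ⟨l, hl⟩ := hexp hFne
  have himg : φ '' (convexHull ℝ DCP6) =
      {x ∈ convexHull ℝ (SSP G) | ∀ y ∈ convexHull ℝ (SSP G), l y ≤ l x} := himg0.trans hl
  have hK := key1 G l φ hinj himg
  obtain ⟨hASSP, hAmax⟩ := hK vA vA_mem
  obtain ⟨hA'SSP, _⟩ := hK vA' vA'_mem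
  obtain ⟨hBSSP, hBmax⟩ := hK vB vB_mem
  obtain ⟨hB'SSP, _⟩ := hK vB' vB'_mem
  obtain ⟨hCSSP, hCmax⟩ := hK vC vC_mem
  obtain ⟨hC'SSP, _⟩ := hK vC' vC'_mem
  have hwB : φ vA + φ vA' = φ vB + φ vB' := affine_add_eq φ sum_AB
  have hwC : φ vA + φ vA' = φ vC + φ vC' := affine_add_eq φ sum_AC
  have hpairAB : ∀ u u', u ∈ SSP G → (∀ y ∈ convexHull ℝ (SSP G), l y ≤ l u) →
      u' ∈ SSP G → (∀ y ∈ convexHull ℝ (SSP G), l y ≤ l u') → u + u' = φ vA + φ vB →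
      (u = φ vA ∧ u' = φ vB) ∨ (u = φ vB ∧ u' = φ vA) := by
    intro u u' hu hmu hu' hmu' hs
    obtain ⟨p, hp, rfl⟩ := key2 G l φ hinj himg hu hmu
    obtain ⟨p', hp', rfl⟩ := key2 G l φ hinj himg hu' hmu'
    rcases pairfix_AB hp hp' (sum_transfer φ hinj hs) with ⟨e1, e2⟩ | ⟨e1, e2⟩
    · exact Or.inl ⟨by rw [e1], by rw [e2]⟩
    · exact Or.inr ⟨by rw [e1], by rw [e2]⟩
  have hpairAC : ∀ u u', u ∈ SSP G → (∀ y ∈ convexHull ℝ (SSP G), l y ≤ l u) →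
      u' ∈ SSP G → (∀ y ∈ convexHull ℝ (SSP G), l y ≤ l u') → u + u' = φ vA + φ vC →
      (u = φ vA ∧ u' = φ vC) ∨ (u = φ vC ∧ u' = φ vA) := by
    intro u u' hu hmu hu' hmu' hs
    obtain ⟨p, hp, rfl⟩ := key2 G l φ hinj himg hu hmu
    obtain ⟨p', hp', rfl⟩ := key2 G l φ hinj himg hu' hmu'
    rcases pairfix_AC hp hp' (sum_transfer φ hinj hs) with ⟨e1, e2⟩ | ⟨e1, e2⟩
    · exact Or.inl ⟨by rw [e1], by rw [e2]⟩
    · exact Or.inr ⟨by rw [e1], by rw [e2]⟩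
  have hpairBC : ∀ u u', u ∈ SSP G → (∀ y ∈ convexHull ℝ (SSP G), l y ≤ l u) →
      u' ∈ SSP G → (∀ y ∈ convexHull ℝ (SSP G), l y ≤ l u') → u + u' = φ vB + φ vC →
      (u = φ vB ∧ u' = φ vC) ∨ (u = φ vC ∧ u' = φ vB) := by
    intro u u' hu hmu hu' hmu' hs
    obtain ⟨p, hp, rfl⟩ := key2 G l φ hinj himg hu hmu
    obtain ⟨p', hp', rfl⟩ := key2 G l φ hinj himg hu' hmu'
    rcases pairfix_BC hp hp' (sum_transfer φ hinj hs) with ⟨e1, e2⟩ | ⟨e1, e2⟩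
    · exact Or.inl ⟨by rw [e1], by rw [e2]⟩
    · exact Or.inr ⟨by rw [e1], by rw [e2]⟩
  have conn1 := fun {i j : Fin k} h1 h2 h3 h4 =>
    conn G l (φ vA) (φ vA') (φ vB) (φ vB') (φ vC) (φ vC') hASSP hA'SSP hBSSP hB'SSP
      hCSSP hC'SSP hAmax hBmax hwB hwC hpairAB (i := i) (j := j) h1 h2 h3 h4
  have conn2 := fun {i j : Fin k} h1 h2 h3 h4 =>
    conn G l (φ vA) (φ vA') (φ vC) (φ vC') (φ vB) (φ vB') hASSP hA'SSP hCSSP hC'SSP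
      hBSSP hB'SSP hAmax hCmax hwC hwB hpairAC (i := i) (j := j) h1 h2 h3 h4
  have conn3 := fun {i j : Fin k} h1 h2 h3 h4 =>
    conn G l (φ vB) (φ vB') (φ vC) (φ vC') (φ vA) (φ vA') hBSSP hB'SSP hCSSP hC'SSP
      hASSP hA'SSP hBmax hCmax (hwB.symm.trans hwC) hwB.symm hpairBC (i := i) (j := j) h1 h2 h3 h4
  have hABne : ∃ i, φ vA i ≠ φ vB i := by
    by_contra h
    push_neg at h
    exact vA_ne_vB (hinj (funext h))
  have hACne : ∃ i, φ vA i ≠ φ vC i := by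
    by_contra h
    push_neg at h
    exact vA_ne_vC (hinj (funext h))
  have hBCne : ∃ i, φ vB i ≠ φ vC i := by
    by_contra h
    push_neg at h
    exact vB_ne_vC (hinj (funext h))
  obtain ⟨i1, hi1⟩ := hABne
  obtain ⟨i2, hi2⟩ := hACne
  obtain ⟨i3, hi3⟩ := hBCne
  by_cases hq : φ vA i1 = φ vC i1
  · have ca : ∀ i, φ vA i ≠ φ vB i → φ vA i = φ vC i := by
      intro i h
      by_contra hne
      exact conn1 hi1 h hq hne
    have hA2B2 : φ vA i2 = φ vB i2 := by
      by_contra h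
      exact hi2 (ca i2 h)
    have hBC1 : φ vB i1 ≠ φ vC i1 := fun h => hi1 (hq.trans h.symm)
    have cb : ∀ i, φ vB i ≠ φ vC i → φ vB i ≠ φ vA i := by
      intro i h hba
      exact conn3 h hBC1 hba (fun h' => hi1 h'.symm)
    have hBC2 : φ vB i2 ≠ φ vC i2 := fun h => hi2 (hA2B2.trans h)
    exact cb i2 hBC2 hA2B2.symm
  · have cb2 : ∀ i, φ vA i ≠ φ vC i → φ vA i ≠ φ vB i := by
      intro i h hab
      exact conn2 h hq hab hi1
    have cc : ∀ i, φ vA i ≠ φ vB i → φ vA i ≠ φ vC i := by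
      intro i h hac
      exact conn1 h hi1 hac hq
    have hdisj : ∀ i, φ vA i ≠ φ vB i → φ vB i = φ vC i := by
      intro i h
      have h2 := cc i h
      rcases hASSP.1 i with e|e <;> rcases hBSSP.1 i with e2|e2 <;>
        rcases hCSSP.1 i with e3|e3 <;>
        first
          | exact absurd (e.trans e2.symm) h
          | exact absurd (e.trans e3.symm) h2
          | rw [e2, e3]
    have hA3B3 : φ vA i3 = φ vB i3 := by
      by_contra h
      exact hi3 (hdisj i3 h)
    have hA3C3 : φ vA i3 = φ vC i3 := by
      by_contra h
      exact (cb2 i3 h) hA3B3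
    exact hi3 (hA3B3.symm.trans hA3C3)
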